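/- Let Γ be a connected hairy graph. The assignment (ρ, a) ↦ (ρ \ {a}, a) is a bijection from the set of pairs (ρ, a), where ρ is a cycled forest of Γ and a is an edge of the unique cycle of ρ, to the set of pairs (τ, a), where τ is a spanning forest of Γ and a is an edge of Γ not in τ whose two endpoints lie in the same connected component of τ. -/

import Mathlib

/-!
Common definitions for the formalization of the graph complexes of
Andersson–Willwacher–Živković, *Oriented hairy graphs and moduli spaces of curves*.

We model graphs with labelled external legs (hairs) combinatorially, and we model
the various graph complexes as (abstract) cochain complexes of `ℚ`-vector spaces
together with a family of generators indexed by the combinatorial graphs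
satisfying the appropriate conditions.  The differentials and the combinatorially
defined maps between graph complexes are characterized by explicit equations on
the generators (sums over edge contractions, spanning forests, etc.); signs
coming from edge orientations are quantified existentially (values `±1`).
-/

noncomputable section

/-- A (finite, in applications) directed multigraph with external legs ("hairs")
labelled by the set `S`.  Internal vertices form the type `V`; each edge has a
source and a target in `V ⊕ S`. Edge directions are immaterial for the
"undirected" graph complexes. -/
structure HGraph (S : Type) where
  V : Type
  E : Type
  src : E → V ⊕ S
  tgt : E → V ⊕ S

namespace HGraph

variable {S T : Type} (G : HGraph S)

def IsFinite : Prop := Finite G.V ∧ Finite G.E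

/-- Undirected adjacency through an edge belonging to `T`. -/
def Adj (T : Set G.E) (x y : G.V ⊕ S) : Prop :=
  ∃ e ∈ T, (G.src e = x ∧ G.tgt e = y) ∨ (G.src e = y ∧ G.tgt e = x)

/-- Undirected reachability using only edges in `T`. -/
def Reach (T : Set G.E) : G.V ⊕ S → G.V ⊕ S → Prop :=
  Relation.ReflTransGen (G.Adj T)

def Connected : Prop := ∀ x y : G.V ⊕ S, G.Reach Set.univ x y

def outdeg (v : G.V) : ℕ := {e : G.E | G.src e = Sum.inl v}.ncard
def indeg (v : G.V) : ℕ := {e : G.E | G.tgt e = Sum.inl v}.ncard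
/-- the valence (total degree) of an internal vertex -/
def valence (v : G.V) : ℕ := G.outdeg v + G.indeg v

def hairValence (s : S) : ℕ :=
  {e : G.E | G.src e = Sum.inr s}.ncard + {e : G.E | G.tgt e = Sum.inr s}.ncard

/-- every external vertex is univalent -/
def IsHairy : Prop := ∀ s : S, G.hairValence s = 1

/-- every external vertex is the target of exactly one edge and the source of none -/
def HairsAreTargets : Prop :=
  ∀ s : S, {e : G.E | G.tgt e = Sum.inr s}.ncard = 1 ∧
    {e : G.E | G.src e = Sum.inr s}.ncard = 0

/-- The subgraph on all vertices with edge set `T` has no (undirected) cycles. -/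
def IsForestSub (T : Set G.E) : Prop :=
  ∀ e ∈ T, ¬ G.Reach (T \ {e}) (G.src e) (G.tgt e)

/-- A *spanning forest*: a subgraph containing all vertices and having no cycles,
each of whose connected components contains exactly one external vertex. -/
def IsSpanningForest (T : Set G.E) : Prop :=
  G.IsForestSub T ∧ ∀ x : G.V ⊕ S, ∃! s : S, G.Reach T x (Sum.inr s)

/-- A *cycled forest*: a subgraph containing all vertices, with (number of internal
vertices) + 1 edges, each of whose connected components contains exactly one
external vertex.  Such a subgraph contains exactly one cycle. -/
def IsCycledForest (T : Set G.E) : Prop :=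
  T.ncard = Nat.card G.V + 1 ∧ ∀ x : G.V ⊕ S, ∃! s : S, G.Reach T x (Sum.inr s)

/-- A *double-hair forest*: a subgraph containing all vertices, having no cycles,
exactly one of whose connected components contains exactly the two external
vertices `j ≠ k`, all other components containing exactly one external vertex. -/
def IsDoubleHairForest (T : Set G.E) (j k : S) : Prop :=
  G.IsForestSub T ∧ j ≠ k ∧ G.Reach T (Sum.inr j) (Sum.inr k) ∧
  (∀ x : G.V ⊕ S, ∃ s : S, G.Reach T x (Sum.inr s)) ∧
  (∀ s s' : S, s ≠ s' → G.Reach T (Sum.inr s) (Sum.inr s') →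
    (s = j ∧ s' = k) ∨ (s = k ∧ s' = j))

/-- one directed step along an edge -/
def DStep (x y : G.V ⊕ S) : Prop := ∃ e : G.E, G.src e = x ∧ G.tgt e = y

/-- the graph is directed acyclic -/
def NoDirectedCycles : Prop := ∀ x : G.V ⊕ S, ¬ Relation.TransGen G.DStep x x

/-- no passing vertices (2-valent vertices with exactly one incoming and one
outgoing edge) -/
def NoPassingVertices : Prop := ∀ v : G.V, ¬ (G.indeg v = 1 ∧ G.outdeg v = 1)

/-- Defining conditions for the generators of the (undirected) hairy graph complex
`HG^S_n`: finite, connected, all internal vertices at least trivalent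
and all external legs univalent.  (Edge directions are immaterial here.) -/
def IsHG : Prop := G.IsFinite ∧ G.Connected ∧ G.IsHairy ∧ ∀ v : G.V, 3 ≤ G.valence v

/-- Defining conditions for the generators of the oriented hairy graph complex
`HOG^S_n`: finite, connected, external vertices are univalent targets, internal
vertices are at least 2-valent with at least one outgoing edge (no internal
sinks), there are no passing vertices and no directed cycles. -/
def IsHOG : Prop :=
  G.IsFinite ∧ G.Connected ∧ G.HairsAreTargets ∧ (∀ v : G.V, 2 ≤ G.valence v) ∧
    (∀ v : G.V, 1 ≤ G.outdeg v) ∧ G.NoPassingVertices ∧ G.NoDirectedCycles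

/-- Defining conditions for the generators of the (non-hairy) oriented graph
complex `OGC_n` (used with `S = Empty`): finite, connected, all vertices of
valence at least 2, no passing vertices and no directed cycles. -/
def IsOG : Prop :=
  G.IsFinite ∧ G.Connected ∧ (∀ v : G.V, 2 ≤ G.valence v) ∧
    G.NoPassingVertices ∧ G.NoDirectedCycles

def nV : ℤ := (Nat.card G.V : ℤ)
def nE : ℤ := (Nat.card G.E : ℤ)

/-- The cohomological degree of a generator of the graph complex with index `k`
(edges of degree `k-1`, vertices of degree `-k`):  `(k-1)·e − k·v`. -/
def deg (k : ℤ) : ℤ := (k - 1) * G.nE - k * G.nV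

/-- loop order = first Betti number `e − v + 1` of the connected graph
(the vertex count includes the external vertices) -/
def loopOrder : ℤ := G.nE - (G.nV + (Nat.card S : ℤ)) + 1

/-- number of sinks (vertices with no outgoing edge) -/
def nSinks : ℕ := Nat.card {v : G.V // G.outdeg v = 0}

/-- A directed graph is a *forest graph* if every internal vertex of valence at
least 3 has exactly one outgoing edge. -/
def IsForestGraph : Prop := ∀ v : G.V, 3 ≤ G.valence v → G.outdeg v = 1

/-- relabelling the hairs along a bijection -/
def relabel (σ : S ≃ T) : HGraph T where
  V := G.V
  E := G.E
  src x := Sum.map id (⇑σ) (G.src x)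
  tgt x := Sum.map id (⇑σ) (G.tgt x)

/-- Contraction of the edge `a`, merging the vertex `v₂` into `v₁` and
deleting `a`. -/
def contract (a : G.E) (v₁ v₂ : G.V) (hne : v₁ ≠ v₂) : HGraph S where
  V := {x : G.V // x ≠ v₂}
  E := {e : G.E // e ≠ a}
  src e := Sum.map
    (fun x => haveI := Classical.propDecidable (x = v₂)
      if h : x = v₂ then (⟨v₁, hne⟩ : {y : G.V // y ≠ v₂}) else ⟨x, h⟩) id (G.src e.1)
  tgt e := Sum.map
    (fun x => haveI := Classical.propDecidable (x = v₂)
      if h : x = v₂ then (⟨v₁, hne⟩ : {y : G.V // y ≠ v₂}) else ⟨x, h⟩) id (G.tgt e.1)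

/-- An edge is contractible if it connects two distinct internal vertices. -/
def ContractibleEdge (a : G.E) : Prop :=
  ∃ v₁ v₂ : G.V, G.src a = Sum.inl v₁ ∧ G.tgt a = Sum.inl v₂ ∧ v₁ ≠ v₂

def contractEdge (a : G.E) (h : G.ContractibleEdge a) : HGraph S :=
  G.contract a h.choose h.choose_spec.choose h.choose_spec.choose_spec.2.2

/-- The orientation of a forest edge towards the unique external vertex of its
connected component: the new target is the endpoint which still reaches an
external vertex after removing the edge. -/
def forestDir (T : Set G.E) (e : G.E) : (G.V ⊕ S) × (G.V ⊕ S) :=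
  haveI := Classical.propDecidable (∃ s : S, G.Reach (T \ {e}) (G.tgt e) (Sum.inr s))
  if ∃ s : S, G.Reach (T \ {e}) (G.tgt e) (Sum.inr s) then (G.src e, G.tgt e)
  else (G.tgt e, G.src e)

/-- The directed graph `Φ_T(G)` associated with a graph `G` and a spanning forest
`T`: the forest edges are directed towards the unique external vertex of their
component, and every non-forest edge is replaced by a zigzag `← • →`, i.e. a new
2-valent source vertex with two outgoing edges. -/
def forestGraph (T : Set G.E) : HGraph S where
  V := G.V ⊕ {e : G.E // e ∉ T}
  E := {e : G.E // e ∈ T} ⊕ ({e : G.E // e ∉ T} × Bool)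
  src x :=
    match x with
    | Sum.inl e => Sum.map Sum.inl id ((G.forestDir T e.1).1)
    | Sum.inr (e, _) => Sum.inl (Sum.inr e)
  tgt x :=
    match x with
    | Sum.inl e => Sum.map Sum.inl id ((G.forestDir T e.1).2)
    | Sum.inr (e, b) => Sum.map Sum.inl id (if b then G.src e.1 else G.tgt e.1)

end HGraph

/-- isomorphism of directed graphs with labelled hairs -/
structure GraphIso {S : Type} (G H : HGraph S) where
  vEquiv : G.V ≃ H.V
  eEquiv : G.E ≃ H.E
  src_eq : ∀ e, H.src (eEquiv e) = Sum.map (⇑vEquiv) id (G.src e)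
  tgt_eq : ∀ e, H.tgt (eEquiv e) = Sum.map (⇑vEquiv) id (G.tgt e)

/-- isomorphism of graphs with labelled hairs, disregarding edge directions -/
structure UIso {S : Type} (G H : HGraph S) where
  vEquiv : G.V ≃ H.V
  eEquiv : G.E ≃ H.E
  ends : ∀ e,
    (H.src (eEquiv e) = Sum.map (⇑vEquiv) id (G.src e) ∧
     H.tgt (eEquiv e) = Sum.map (⇑vEquiv) id (G.tgt e)) ∨
    (H.src (eEquiv e) = Sum.map (⇑vEquiv) id (G.tgt e) ∧
     H.tgt (eEquiv e) = Sum.map (⇑vEquiv) id (G.src e))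

/-! ### Skeleton graphs (graphs with edge types) -/

/-- The three edge types of the skeleton complex `HO^skG^S_n`: forward-directed,
backward-directed (relative to the core direction) and crossed. -/
inductive EdgeType where
  | fwd | bwd | cross
deriving DecidableEq

def EdgeType.flip : EdgeType → EdgeType
  | .fwd => .bwd
  | .bwd => .fwd
  | .cross => .cross

/-- A skeleton graph: a core graph together with an edge type on each edge. -/
structure SkGraph (S : Type) where
  core : HGraph S
  typ : core.E → EdgeType

/-- pointwise update of an edge-type assignment -/
def updTyp {E : Type*} (t : E → EdgeType) (a : E) (τ : EdgeType) : E → EdgeType :=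
  fun e => haveI := Classical.propDecidable (e = a); if e = a then τ else t e

namespace SkGraph

variable {S : Type} (X : SkGraph S)

/-- one step along the type direction of a directed (non-crossed) edge -/
def TStep (x y : X.core.V ⊕ S) : Prop :=
  ∃ e, (X.typ e = EdgeType.fwd ∧ X.core.src e = x ∧ X.core.tgt e = y) ∨
       (X.typ e = EdgeType.bwd ∧ X.core.src e = y ∧ X.core.tgt e = x)

/-- there is a directed edge whose type direction points away from `x` -/
def PointsAway (x : X.core.V ⊕ S) : Prop :=
  ∃ e, (X.typ e = EdgeType.fwd ∧ X.core.src e = x) ∨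
       (X.typ e = EdgeType.bwd ∧ X.core.tgt e = x)

/-- admissibility of an edge-type assignment: every internal vertex has an
adjacent directed edge with type direction pointing away from it, external
vertices are type-targets, and there are no type-directed cycles -/
def Admissible : Prop :=
  (∀ v : X.core.V, X.PointsAway (Sum.inl v)) ∧
  (∀ s : S, ¬ X.PointsAway (Sum.inr s)) ∧
  (∀ x : X.core.V ⊕ S, ¬ Relation.TransGen X.TStep x x)

/-- conditions for the generators of the skeleton complex `HO^skG^S_n` -/
def IsHOsk : Prop := X.core.IsHG ∧ X.Admissible

def nCross : ℤ := (Nat.card {e : X.core.E // X.typ e = EdgeType.cross} : ℤ)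
def nDir : ℤ := (Nat.card {e : X.core.E // X.typ e ≠ EdgeType.cross} : ℤ)

/-- degree in the skeleton complex with index `k`: directed edges have degree
`k−1`, crossed edges degree `k−2`, vertices degree `−k`. -/
def deg (k : ℤ) : ℤ := (k - 1) * X.nDir + (k - 2) * X.nCross - k * X.core.nV

/-- contraction of an edge of a skeleton graph -/
def contract (a : X.core.E) (v₁ v₂ : X.core.V) (hne : v₁ ≠ v₂) : SkGraph S :=
  ⟨X.core.contract a v₁ v₂ hne, fun e => X.typ e.1⟩

def contractEdge (a : X.core.E) (h : X.core.ContractibleEdge a) : SkGraph S :=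
  ⟨X.core.contractEdge a h, fun e => X.typ e.1⟩

/-- Expansion of a skeleton graph into an honest directed graph: each crossed
edge is replaced by a zigzag `← • →` and directed edges are oriented according
to their type. -/
def expand : HGraph S where
  V := X.core.V ⊕ {e : X.core.E // X.typ e = EdgeType.cross}
  E := {e : X.core.E // X.typ e ≠ EdgeType.cross} ⊕
       ({e : X.core.E // X.typ e = EdgeType.cross} × Bool)
  src x :=
    match x with
    | Sum.inl e =>
        Sum.map Sum.inl id
          (if X.typ e.1 = EdgeType.bwd then X.core.tgt e.1 else X.core.src e.1)
    | Sum.inr (e, _) => Sum.inl (Sum.inr e)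
  tgt x :=
    match x with
    | Sum.inl e =>
        Sum.map Sum.inl id
          (if X.typ e.1 = EdgeType.bwd then X.core.src e.1 else X.core.tgt e.1)
    | Sum.inr (e, b) =>
        Sum.map Sum.inl id (if b then X.core.src e.1 else X.core.tgt e.1)

end SkGraph

/-- isomorphism of skeleton graphs; reversing the core direction of an edge
exchanges forward and backward types and fixes crossed edges -/
structure SkIso {S : Type} (X Y : SkGraph S) where
  vEquiv : X.core.V ≃ Y.core.V
  eEquiv : X.core.E ≃ Y.core.E
  ends : ∀ e,
    (Y.core.src (eEquiv e) = Sum.map (⇑vEquiv) id (X.core.src e) ∧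
     Y.core.tgt (eEquiv e) = Sum.map (⇑vEquiv) id (X.core.tgt e) ∧
     Y.typ (eEquiv e) = X.typ e) ∨
    (Y.core.src (eEquiv e) = Sum.map (⇑vEquiv) id (X.core.tgt e) ∧
     Y.core.tgt (eEquiv e) = Sum.map (⇑vEquiv) id (X.core.src e) ∧
     Y.typ (eEquiv e) = (X.typ e).flip)

namespace HGraph

/-- The edge-type assignment `Φ_T(G)` of the spanning forest `T`: forest edges are
directed (by type) towards the unique external vertex of their component and all
other edges are crossed. -/
def forestTyp {S : Type} (G : HGraph S) (T : Set G.E) (e : G.E) : EdgeType :=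
  haveI := Classical.propDecidable (e ∈ T)
  haveI := Classical.propDecidable (∃ s : S, G.Reach (T \ {e}) (G.tgt e) (Sum.inr s))
  if e ∈ T then
    (if ∃ s : S, G.Reach (T \ {e}) (G.tgt e) (Sum.inr s) then EdgeType.fwd
     else EdgeType.bwd)
  else EdgeType.cross

/-- the skeleton graph `Φ_T(G)` associated with a spanning forest `T` of `G` -/
def skeleton {S : Type} (G : HGraph S) (T : Set G.E) : SkGraph S := ⟨G, G.forestTyp T⟩

end HGraph

/-! ### Graphs with unlabelled (symmetrized) hairs -/

/-- A graph together with its (unspecified) hair-labelling set; used for the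
graph complexes with (anti-)symmetrized hairs. -/
structure SGraph where
  S : Type
  G : HGraph S

/-- isomorphism of directed graphs with symmetrized hairs -/
structure SIso (A B : SGraph) where
  sEquiv : A.S ≃ B.S
  vEquiv : A.G.V ≃ B.G.V
  eEquiv : A.G.E ≃ B.G.E
  src_eq : ∀ e, B.G.src (eEquiv e) = Sum.map (⇑vEquiv) (⇑sEquiv) (A.G.src e)
  tgt_eq : ∀ e, B.G.tgt (eEquiv e) = Sum.map (⇑vEquiv) (⇑sEquiv) (A.G.tgt e)

/-- isomorphism of undirected graphs with symmetrized hairs -/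
structure USIso (A B : SGraph) where
  sEquiv : A.S ≃ B.S
  vEquiv : A.G.V ≃ B.G.V
  eEquiv : A.G.E ≃ B.G.E
  ends : ∀ e,
    (B.G.src (eEquiv e) = Sum.map (⇑vEquiv) (⇑sEquiv) (A.G.src e) ∧
     B.G.tgt (eEquiv e) = Sum.map (⇑vEquiv) (⇑sEquiv) (A.G.tgt e)) ∨
    (B.G.src (eEquiv e) = Sum.map (⇑vEquiv) (⇑sEquiv) (A.G.tgt e) ∧
     B.G.tgt (eEquiv e) = Sum.map (⇑vEquiv) (⇑sEquiv) (A.G.src e))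

namespace SGraph

/-- generators of the symmetrized hairy graph complexes `HG_{m,n}` -/
def IsHGS (X : SGraph) : Prop := X.G.IsHG ∧ Finite X.S ∧ Nonempty X.S

/-- generators of the symmetrized oriented hairy graph complexes `HOG_{m,n}` -/
def IsHOGS (X : SGraph) : Prop := X.G.IsHOG ∧ Finite X.S ∧ Nonempty X.S

/-- degree in the symmetrized hairy complex `H(O)G_{m,k}` -/
def symDeg (m k : ℤ) (X : SGraph) : ℤ := X.G.deg k - m * (Nat.card X.S : ℤ) + m

/-- degree in the dual complexes `H(O)GC_{m,k}` (vertex-splitting differential) -/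
def dualSymDeg (m k : ℤ) (X : SGraph) : ℤ := -(X.symDeg m k)

/-- Attach the hair `h` of `X` to the internal vertex `v` of `Y` (one term of the
hairy graph complex Lie bracket). -/
def attach (X Y : SGraph) (h : X.S) (v : Y.G.V) : SGraph :=
  ⟨{s : X.S // s ≠ h} ⊕ Y.S,
   { V := X.G.V ⊕ Y.G.V
     E := X.G.E ⊕ Y.G.E
     src := fun e =>
       match e with
       | Sum.inl e =>
         (match X.G.src e with
          | Sum.inl w => Sum.inl (Sum.inl w)
          | Sum.inr s =>
            haveI := Classical.propDecidable (s = h)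
            if hs : s = h then Sum.inl (Sum.inr v) else Sum.inr (Sum.inl ⟨s, hs⟩))
       | Sum.inr e =>
         (match Y.G.src e with
          | Sum.inl w => Sum.inl (Sum.inr w)
          | Sum.inr s => Sum.inr (Sum.inr s))
     tgt := fun e =>
       match e with
       | Sum.inl e =>
         (match X.G.tgt e with
          | Sum.inl w => Sum.inl (Sum.inl w)
          | Sum.inr s =>
            haveI := Classical.propDecidable (s = h)
            if hs : s = h then Sum.inl (Sum.inr v) else Sum.inr (Sum.inl ⟨s, hs⟩))
       | Sum.inr e =>
         (match Y.G.tgt e with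
          | Sum.inl w => Sum.inl (Sum.inr w)
          | Sum.inr s => Sum.inr (Sum.inr s)) }⟩

/-- Graft a new internal vertex with one edge into the vertex `v` and `k`
outgoing hairs (one term of `[m₁, −]`). -/
def graftAt (X : SGraph) (v : X.G.V) (k : ℕ) : SGraph :=
  ⟨X.S ⊕ Fin k,
   { V := X.G.V ⊕ PUnit
     E := X.G.E ⊕ (PUnit ⊕ Fin k)
     src := fun e =>
       match e with
       | Sum.inl e => Sum.map Sum.inl Sum.inl (X.G.src e)
       | Sum.inr _ => Sum.inl (Sum.inr PUnit.unit)
     tgt := fun e =>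
       match e with
       | Sum.inl e => Sum.map Sum.inl Sum.inl (X.G.tgt e)
       | Sum.inr (Sum.inl _) => Sum.inl (Sum.inl v)
       | Sum.inr (Sum.inr i) => Sum.inr (Sum.inr i) }⟩

/-- Replace the hair `h` of `X` by a new internal vertex carrying `k` outgoing
hairs (the other term of `[m₁, −]`). -/
def graftHair (X : SGraph) (h : X.S) (k : ℕ) : SGraph :=
  ⟨{s : X.S // s ≠ h} ⊕ Fin k,
   { V := X.G.V ⊕ PUnit
     E := X.G.E ⊕ Fin k
     src := fun e =>
       match e with
       | Sum.inl e =>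
         (match X.G.src e with
          | Sum.inl w => Sum.inl (Sum.inl w)
          | Sum.inr s =>
            haveI := Classical.propDecidable (s = h)
            if hs : s = h then Sum.inl (Sum.inr PUnit.unit) else Sum.inr (Sum.inl ⟨s, hs⟩))
       | Sum.inr _ => Sum.inl (Sum.inr PUnit.unit)
     tgt := fun e =>
       match e with
       | Sum.inl e =>
         (match X.G.tgt e with
          | Sum.inl w => Sum.inl (Sum.inl w)
          | Sum.inr s =>
            haveI := Classical.propDecidable (s = h)
            if hs : s = h then Sum.inl (Sum.inr PUnit.unit) else Sum.inr (Sum.inl ⟨s, hs⟩))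
       | Sum.inr i => Sum.inr (Sum.inr i) }⟩

/-- A *bad vertex*: an internal vertex sharing an edge with an external vertex
and having more than one outgoing edge. -/
def BadVertex (X : SGraph) (v : X.G.V) : Prop :=
  (∃ e : X.G.E, X.G.src e = Sum.inl v ∧ ∃ s : X.S, X.G.tgt e = Sum.inr s) ∧
  2 ≤ X.G.outdeg v

def NoBadVertices (X : SGraph) : Prop := ∀ v : X.G.V, ¬ X.BadVertex v

end SGraph

/-- the corolla: one internal vertex with `k` outgoing hairs (the terms of the
Maurer–Cartan element `m₁`) -/
def corolla (k : ℕ) : SGraph :=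
  ⟨Fin k,
   { V := PUnit, E := Fin k,
     src := fun _ => Sum.inl PUnit.unit,
     tgt := fun i => Sum.inr i }⟩

/-- the Maurer–Cartan element `m₀`: a single edge connecting two external vertices -/
def edgeGraph : SGraph :=
  ⟨Bool,
   { V := Empty, E := PUnit,
     src := fun _ => Sum.inr false,
     tgt := fun _ => Sum.inr true }⟩

namespace HGraph

/-- attach one outgoing hair to each sink of a directed graph without legs -/
def attachHairs (G₀ : HGraph Empty) : SGraph :=
  ⟨{v : G₀.V // G₀.outdeg v = 0},
   { V := G₀.V
     E := G₀.E ⊕ {v : G₀.V // G₀.outdeg v = 0}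
     src := fun e =>
       match e with
       | Sum.inl e => Sum.map id Empty.elim (G₀.src e)
       | Sum.inr v => Sum.inl v.1
     tgt := fun e =>
       match e with
       | Sum.inl e => Sum.map id Empty.elim (G₀.tgt e)
       | Sum.inr v => Sum.inr v }⟩

/-- attach `k` outgoing hairs to the vertices of a directed graph without legs,
according to the assignment `f` -/
def addHairsBy (G₀ : HGraph Empty) (k : ℕ) (f : Fin k → G₀.V) : SGraph :=
  ⟨Fin k,
   { V := G₀.V
     E := G₀.E ⊕ Fin k
     src := fun e =>
       match e with
       | Sum.inl e => Sum.map id Empty.elim (G₀.src e)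
       | Sum.inr i => Sum.inl (f i)
     tgt := fun e =>
       match e with
       | Sum.inl e => Sum.map id Empty.elim (G₀.tgt e)
       | Sum.inr i => Sum.inr i }⟩

end HGraph

/-! ### Decorated graphs (for the complexes `HGC^{S,mod}`) -/

/-- a graph each of whose internal vertices carries a genus decoration `g_x ∈ ℕ` -/
structure DGraph (S : Type) where
  G : HGraph S
  dec : G.V → ℕ

namespace DGraph

variable {S : Type} (X : DGraph S)

/-- stability: finite, connected, hairs univalent and `2·g_x + |star(x)| ≥ 3`
at every internal vertex -/
def IsStable : Prop :=
  X.G.IsFinite ∧ X.G.Connected ∧ X.G.IsHairy ∧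
    ∀ v : X.G.V, 3 ≤ 2 * X.dec v + X.G.valence v

/-- the genus: loop order plus the sum of the vertex decorations -/
def genus : ℤ := X.G.loopOrder + ∑ᶠ v : X.G.V, (X.dec v : ℤ)

/-- add a tadpole at `v` and decrease its decoration by one -/
def addTadpole (v : X.G.V) : DGraph S :=
  ⟨{ V := X.G.V
     E := X.G.E ⊕ PUnit
     src := fun e =>
       match e with
       | Sum.inl e => X.G.src e
       | Sum.inr _ => Sum.inl v
     tgt := fun e =>
       match e with
       | Sum.inl e => X.G.tgt e
       | Sum.inr _ => Sum.inl v },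
   fun w => haveI := Classical.propDecidable (w = v)
     if w = v then X.dec v - 1 else X.dec w⟩

/-- contraction of an edge of a decorated graph (decorations add up) -/
def contractEdge (a : X.G.E) (h : X.G.ContractibleEdge a) : DGraph S :=
  ⟨X.G.contractEdge a h,
   fun w => haveI := Classical.propDecidable (w.1 = h.choose)
     if w.1 = h.choose then X.dec h.choose + X.dec h.choose_spec.choose
     else X.dec w.1⟩

/-- Replace every univalent vertex of positive decoration by a tadpole at its
adjacent vertex, as prescribed by the retraction `f` (which must be the identity
on vertices of decoration `0` and send a decorated vertex to its neighbour). -/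
def collapseWith (f : X.G.V → {v : X.G.V // X.dec v = 0}) : DGraph S :=
  ⟨{ V := {v : X.G.V // X.dec v = 0}
     E := X.G.E
     src := fun e => Sum.map (fun v => f v) id (X.G.src e)
     tgt := fun e => Sum.map (fun v => f v) id (X.G.tgt e) },
   fun _ => 0⟩

/-- the exceptional graph: a single internal vertex with a tadpole and one hair -/
def IsTadpoleOneHair : Prop :=
  Nat.card X.G.V = 1 ∧ Nat.card X.G.E = 2 ∧ Nat.card S = 1 ∧
  ∃ (e : X.G.E) (v : X.G.V), X.G.src e = Sum.inl v ∧ X.G.tgt e = Sum.inl v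

end DGraph

/-- isomorphism of decorated graphs (undirected) -/
structure DIso {S : Type} (X Y : DGraph S) where
  iso : UIso X.G Y.G
  dec_eq : ∀ v, Y.dec (iso.vEquiv v) = X.dec v

/-! ### Abstract cochain complexes of `ℚ`-vector spaces and presentations -/

/-- a cochain complex of `ℚ`-vector spaces -/
structure GCx where
  X : ℤ → ModuleCat.{0} ℚ
  d : ∀ i : ℤ, X i →ₗ[ℚ] X (i + 1)
  dd : ∀ (i : ℤ) (x : X i), d (i + 1) (d i x) = 0

/-- a map of cochain complexes -/
structure GCxHom (A B : GCx) where
  f : ∀ i : ℤ, A.X i →ₗ[ℚ] B.X i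
  comm : ∀ (i : ℤ) (x : A.X i), f (i + 1) (A.d i x) = B.d i (f i x)

/-- `φ` induces an isomorphism on cohomology -/
def GCxHom.IsQuasiIso {A B : GCx} (φ : GCxHom A B) : Prop :=
  (∀ (i : ℤ) (x : B.X (i + 1)), B.d (i + 1) x = 0 →
    ∃ (y : A.X (i + 1)) (z : B.X i), A.d (i + 1) y = 0 ∧ x = φ.f (i + 1) y + B.d i z) ∧
  (∀ (i : ℤ) (y : A.X (i + 1)), A.d (i + 1) y = 0 →
    (∃ z : B.X i, φ.f (i + 1) y = B.d i z) → ∃ w : A.X i, y = A.d i w)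

/-- `φ` is an isomorphism of complexes -/
def GCxHom.IsIsoCx {A B : GCx} (φ : GCxHom A B) : Prop :=
  ∀ i : ℤ, Function.Bijective (φ.f i)

/-- the complex has vanishing cohomology -/
def GCx.Acyclic (A : GCx) : Prop :=
  ∀ (i : ℤ) (x : A.X (i + 1)), A.d (i + 1) x = 0 → ∃ y : A.X i, x = A.d i y

/-- A presentation of a graph complex: a cochain complex together with a
generator for every generating graph (an element of `ι`) in its degree. -/
structure GenPres (ι : Type*) (dg : ι → ℤ) where
  C : GCx
  gen : (i : ℤ) → {x : ι // dg x = i} → C.X i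

namespace GenPres

variable {ι : Type*} {dg : ι → ℤ}

/-- the generators span the complex -/
def Spans (P : GenPres ι dg) : Prop :=
  ∀ i : ℤ, Submodule.span ℚ (Set.range (P.gen i)) = ⊤

/-- the generator of `x`, viewed in degree `j` (zero if `x` does not have
degree `j`) -/
def el (P : GenPres ι dg) (j : ℤ) (x : ι) : P.C.X j :=
  ∑ᶠ (h : dg x = j), P.gen j ⟨x, h⟩

end GenPres

/-- For an index type which is a subtype `{x : α // cond x}` of combinatorial
graphs: the generator of the graph `a`, which is zero whenever `a` does not
satisfy the defining conditions of the complex or does not have degree `j`. -/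
def GenPres.sel {α : Type*} {cond : α → Prop} {dg : {x : α // cond x} → ℤ}
    (P : GenPres {x : α // cond x} dg) (j : ℤ) (a : α) : P.C.X j :=
  ∑ᶠ (h : cond a), P.el j ⟨a, h⟩

/-! ### Characterizations of the graph complex differentials and of the
combinatorially defined maps between graph complexes -/

/-- The differential acts by contracting edges (not adjacent to external
vertices), with signs `±1`; contractions violating the defining conditions of
the complex contribute zero (e.g. when a directed cycle is produced). -/
def IsContractionDiffL {S : Type} (cond : HGraph S → Prop) {dg}
    (P : GenPres {G : HGraph S // cond G} dg) : Prop :=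
  ∀ (j : ℤ) (G : HGraph S), cond G →
    ∃ ε : G.E → ℚ, (∀ a, ε a = 1 ∨ ε a = -1) ∧
      P.C.d j (P.sel j G) =
        ∑ᶠ (a : G.E) (h : G.ContractibleEdge a), ε a • P.sel (j + 1) (G.contractEdge a h)

/-- symmetrized-hairs version of `IsContractionDiffL` -/
def IsContractionDiffS (cond : SGraph → Prop) {dg}
    (P : GenPres {X : SGraph // cond X} dg) : Prop :=
  ∀ (j : ℤ) (X : SGraph), cond X →
    ∃ ε : X.G.E → ℚ, (∀ a, ε a = 1 ∨ ε a = -1) ∧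
      P.C.d j (P.sel j X) =
        ∑ᶠ (a : X.G.E) (h : X.G.ContractibleEdge a),
          ε a • P.sel (j + 1) (⟨X.S, X.G.contractEdge a h⟩ : SGraph)

/-- The differential of the skeleton complex with sign exponent `w`:
`d = d_C ± d_E`, where `d_C` contracts directed edges between internal vertices
and `d_E` replaces a crossed edge by `(forward) − (−1)^w (backward)`;
inadmissible results are zero. -/
def IsSkDiff {S : Type} (w : ℤ) {dg}
    (Q : GenPres {X : SkGraph S // X.IsHOsk} dg) : Prop :=
  ∀ (j : ℤ) (X : SkGraph S), X.IsHOsk →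
    ∃ ε η : X.core.E → ℚ,
      (∀ a, ε a = 1 ∨ ε a = -1) ∧ (∀ a, η a = 1 ∨ η a = -1) ∧
      Q.C.d j (Q.sel j X) =
        (∑ᶠ (a : X.core.E) (h : X.core.ContractibleEdge a)
            (_ : X.typ a ≠ EdgeType.cross),
          ε a • Q.sel (j + 1) (X.contractEdge a h))
        + ∑ᶠ (a : X.core.E) (_ : X.typ a = EdgeType.cross),
            η a • (Q.sel (j + 1) (⟨X.core, updTyp X.typ a EdgeType.fwd⟩ : SkGraph S)
              - ((-1 : ℚ) ^ w) •
                Q.sel (j + 1) (⟨X.core, updTyp X.typ a EdgeType.bwd⟩ : SkGraph S))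

/-- The dual (vertex-splitting) differential of an undirected graph complex:
`δ Γ` is a combination of graphs `H` which contract onto `Γ`. -/
def IsSplitDiffU {S : Type} (cond : HGraph S → Prop) {dg}
    (P : GenPres {G : HGraph S // cond G} dg) : Prop :=
  ∀ (j : ℤ) (G : HGraph S), cond G →
    P.C.d j (P.sel j G) ∈ Submodule.span ℚ
      {z : P.C.X (j + 1) | ∃ (H : HGraph S) (a : H.E) (h : H.ContractibleEdge a),
        Nonempty (UIso (H.contractEdge a h) G) ∧ z = P.sel (j + 1) H}

/-- directed version of `IsSplitDiffU` -/
def IsSplitDiffD {S : Type} (cond : HGraph S → Prop) {dg}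
    (P : GenPres {G : HGraph S // cond G} dg) : Prop :=
  ∀ (j : ℤ) (G : HGraph S), cond G →
    P.C.d j (P.sel j G) ∈ Submodule.span ℚ
      {z : P.C.X (j + 1) | ∃ (H : HGraph S) (a : H.E) (h : H.ContractibleEdge a),
        Nonempty (GraphIso (H.contractEdge a h) G) ∧ z = P.sel (j + 1) H}

/-- symmetrized-hairs, directed version of the vertex-splitting differential -/
def IsSplitDiffS (cond : SGraph → Prop) {dg}
    (P : GenPres {X : SGraph // cond X} dg) : Prop :=
  ∀ (j : ℤ) (X : SGraph), cond X →
    P.C.d j (P.sel j X) ∈ Submodule.span ℚ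
      {z : P.C.X (j + 1) | ∃ (Y : SGraph) (a : Y.G.E) (h : Y.G.ContractibleEdge a),
        Nonempty (SIso ⟨Y.S, Y.G.contractEdge a h⟩ X) ∧ z = P.sel (j + 1) Y}

/-- symmetrized-hairs, undirected version of the vertex-splitting differential -/
def IsSplitDiffSU (cond : SGraph → Prop) {dg}
    (P : GenPres {X : SGraph // cond X} dg) : Prop :=
  ∀ (j : ℤ) (X : SGraph), cond X →
    P.C.d j (P.sel j X) ∈ Submodule.span ℚ
      {z : P.C.X (j + 1) | ∃ (Y : SGraph) (a : Y.G.E) (h : Y.G.ContractibleEdge a),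
        Nonempty (USIso ⟨Y.S, Y.G.contractEdge a h⟩ X) ∧ z = P.sel (j + 1) Y}

/-- vertex-splitting differential for the decorated complexes `HGC^{S,mod}`:
vertex splittings together with the operation adding a tadpole at a vertex of
positive decoration while decreasing the decoration -/
def IsModSplitDiff {S : Type} (cond : DGraph S → Prop) {dg}
    (Q : GenPres {X : DGraph S // cond X} dg) : Prop :=
  ∀ (j : ℤ) (X : DGraph S), cond X →
    Q.C.d j (Q.sel j X) ∈ Submodule.span ℚ
      {z : Q.C.X (j + 1) |
        (∃ (Y : DGraph S) (a : Y.G.E) (h : Y.G.ContractibleEdge a),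
          Nonempty (DIso (Y.contractEdge a h) X) ∧ z = Q.sel (j + 1) Y) ∨
        (∃ v : X.G.V, 1 ≤ X.dec v ∧ z = Q.sel (j + 1) (X.addTadpole v))}

/-- the part `δ₀` of the vertex-splitting differential of `OGC_n` preserving the
number of sinks -/
def IsSinkSplitDiff {dg} (P : GenPres {G : HGraph Empty // G.IsOG} dg) : Prop :=
  ∀ (j : ℤ) (G : HGraph Empty), G.IsOG →
    P.C.d j (P.sel j G) ∈ Submodule.span ℚ
      {z : P.C.X (j + 1) | ∃ (H : HGraph Empty) (a : H.E) (h : H.ContractibleEdge a),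
        Nonempty (GraphIso (H.contractEdge a h) G) ∧ H.nSinks = G.nSinks ∧
        z = P.sel (j + 1) H}

/-- `F` is the dual of the spanning-forest map `Φ`: `F(Γ)` is a combination of
undirected hairy graphs `G` admitting a spanning forest whose forest expansion
is isomorphic to `Γ`; in particular `F` kills all non-forest graphs. -/
def IsDualForestMapL {S : Type} {dgQ dgP}
    (Q : GenPres {G : HGraph S // G.IsHOG} dgQ)
    (P : GenPres {G : HGraph S // G.IsHG} dgP)
    (F : GCxHom Q.C P.C) : Prop :=
  ∀ (j : ℤ) (Γ : HGraph S), Γ.IsHOG →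
    F.f j (Q.sel j Γ) ∈ Submodule.span ℚ
      {y : P.C.X j | ∃ (G : HGraph S) (_ : G.IsHG) (T : Set G.E),
        G.IsSpanningForest T ∧ Nonempty (GraphIso (G.forestGraph T) Γ) ∧
        y = P.sel j G}

/-- symmetrized-hairs version of `IsDualForestMapL` -/
def IsDualForestMapS {dgQ dgP}
    (Q : GenPres {X : SGraph // X.IsHOGS} dgQ)
    (P : GenPres {X : SGraph // X.IsHGS} dgP)
    (F : GCxHom Q.C P.C) : Prop :=
  ∀ (j : ℤ) (Γ : SGraph), Γ.IsHOGS →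
    F.f j (Q.sel j Γ) ∈ Submodule.span ℚ
      {y : P.C.X j | ∃ (X : SGraph) (_ : X.IsHGS) (T : Set X.G.E),
        X.G.IsSpanningForest T ∧
        Nonempty (SIso ⟨X.S, X.G.forestGraph T⟩ Γ) ∧ y = P.sel j X}

/-- the hairy graph complex Lie bracket: sum over all ways of attaching a hair
of one graph to an internal vertex of the other graph -/
def IsAttachBracket (cond : SGraph → Prop) {dg}
    (P : GenPres {X : SGraph // cond X} dg)
    (br : ∀ i j : ℤ, P.C.X i →ₗ[ℚ] P.C.X j →ₗ[ℚ] P.C.X (i + j)) : Prop :=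
  ∀ (i j : ℤ) (X Y : SGraph), cond X → cond Y →
    br i j (P.sel i X) (P.sel j Y) ∈ Submodule.span ℚ
      {z : P.C.X (i + j) |
        (∃ (h : X.S) (v : Y.G.V), z = P.sel (i + j) (X.attach Y h v)) ∨
        (∃ (h : Y.S) (v : X.G.V), z = P.sel (i + j) (Y.attach X h v))}


/-!
**Statement 9.**
Let `Γ` be a connected hairy graph.  The assignment `(ρ, a) ↦ (ρ \ {a}, a)` is
a bijection from the set of pairs `(ρ, a)`, where `ρ` is a cycled forest of `Γ`
and `a` is an edge of the unique cycle of `ρ` (equivalently: `a ∈ ρ` and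
`ρ \ {a}` is acyclic), to the set of pairs `(τ, a)`, where `τ` is a spanning
forest of `Γ` and `a` is an edge of `Γ` not in `τ` whose two endpoints lie in
the same connected component of `τ`.
-/
namespace Statement9

open HGraph

variable {S : Type} {G : HGraph S}

lemma adj_symm {T : Set G.E} {x y} (h : G.Adj T x y) : G.Adj T y x := by
  obtain ⟨e, he, h⟩ := h
  exact ⟨e, he, h.symm⟩

lemma reach_symm {T : Set G.E} {x y} (h : G.Reach T x y) : G.Reach T y x :=
  (@Relation.ReflTransGen.stdSymm _ (G.Adj T) ⟨fun _ _ => adj_symm⟩).symm _ _ h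

lemma adj_mono {T T' : Set G.E} (hTT : T ⊆ T') {x y} (h : G.Adj T x y) :
    G.Adj T' x y := by
  obtain ⟨e, he, h⟩ := h
  exact ⟨e, hTT he, h⟩

lemma reach_mono {T T' : Set G.E} (hTT : T ⊆ T') {x y} (h : G.Reach T x y) :
    G.Reach T' x y :=
  Relation.ReflTransGen.mono (fun _ _ => adj_mono hTT) _ _ h

lemma diff2_left {T : Set G.E} {a b : G.E} : (T \ {a}) \ {b} ⊆ T \ {b} :=
  fun z hz => ⟨hz.1.1, hz.2⟩

lemma diff2_right {T : Set G.E} {a b : G.E} : (T \ {a}) \ {b} ⊆ T \ {a} :=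
  fun z hz => hz.1

/-- Deleting an edge from a reachability statement. -/
lemma reach_del {T : Set G.E} {x y} (h : G.Reach T x y) (e : G.E) :
    G.Reach (T \ {e}) x y ∨
    (G.Reach (T \ {e}) x (G.src e) ∧ G.Reach (T \ {e}) (G.tgt e) y) ∨
    (G.Reach (T \ {e}) x (G.tgt e) ∧ G.Reach (T \ {e}) (G.src e) y) := by
  induction h with
  | refl => exact Or.inl .refl
  | @tail b c hxb hadj ih =>
    obtain ⟨e', he', hor⟩ := hadj
    by_cases hee : e' = e
    · subst hee
      rcases hor with ⟨hs, ht⟩ | ⟨hs, ht⟩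
      · -- src e' = b, tgt e' = c
        rcases ih with h1 | ⟨h2a, h2b⟩ | ⟨h3a, h3b⟩
        · exact Or.inr (Or.inl ⟨hs ▸ h1, ht ▸ Relation.ReflTransGen.refl⟩)
        · exact Or.inr (Or.inl ⟨h2a, ht ▸ Relation.ReflTransGen.refl⟩)
        · exact Or.inl (ht ▸ h3a)
      · -- src e' = c, tgt e' = b
        rcases ih with h1 | ⟨h2a, h2b⟩ | ⟨h3a, h3b⟩
        · exact Or.inr (Or.inr ⟨ht ▸ h1, hs ▸ Relation.ReflTransGen.refl⟩)
        · exact Or.inl (hs ▸ h2a)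
        · exact Or.inr (Or.inr ⟨h3a, hs ▸ Relation.ReflTransGen.refl⟩)
    · have hstep : G.Adj (T \ {e}) b c := ⟨e', ⟨he', hee⟩, hor⟩
      rcases ih with h1 | ⟨h2a, h2b⟩ | ⟨h3a, h3b⟩
      · exact Or.inl (h1.tail hstep)
      · exact Or.inr (Or.inl ⟨h2a, h2b.tail hstep⟩)
      · exact Or.inr (Or.inr ⟨h3a, h3b.tail hstep⟩)

/-- If the endpoints of `a` are already connected in `T`, inserting `a`
does not create new reachability. -/
lemma reach_insert_elim {T : Set G.E} {a : G.E} {x y}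
    (hst : G.Reach T (G.src a) (G.tgt a)) (h : G.Reach (insert a T) x y) :
    G.Reach T x y := by
  have hsub : (insert a T) \ {a} ⊆ T := by
    intro z hz
    rcases hz.1 with h1 | h1
    · exact absurd h1 hz.2
    · exact h1
  rcases reach_del h a with h1 | ⟨h2a, h2b⟩ | ⟨h3a, h3b⟩
  · exact reach_mono hsub h1
  · exact ((reach_mono hsub h2a).trans hst).trans (reach_mono hsub h2b)
  · exact ((reach_mono hsub h3a).trans (reach_symm hst)).trans (reach_mono hsub h3b)

lemma forest_mono {T T' : Set G.E} (hTT : T' ⊆ T) (h : G.IsForestSub T) :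
    G.IsForestSub T' := fun e he hc =>
  h e (hTT he) (reach_mono (Set.diff_subset_diff_left hTT) hc)

lemma forest_no_tadpole {T : Set G.E} (h : G.IsForestSub T) {e : G.E}
    (he : e ∈ T) : G.src e ≠ G.tgt e := fun hst =>
  h e he (hst ▸ Relation.ReflTransGen.refl)

section Roots

variable {R : Set (G.V ⊕ S)} {T : Set G.E}

/-- Not both endpoints of a forest edge can reach a root after deleting it. -/
lemma not_both (hforest : G.IsForestSub T)
    (hu : ∀ x r r', r ∈ R → r' ∈ R → G.Reach T x r → G.Reach T x r' → r = r')
    {e : G.E} (he : e ∈ T) :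
    ¬ ((∃ r ∈ R, G.Reach (T \ {e}) (G.src e) r) ∧
       (∃ r ∈ R, G.Reach (T \ {e}) (G.tgt e) r)) := by
  rintro ⟨⟨r, hr, hrs⟩, ⟨r', hr', hrt⟩⟩
  have h1 : G.Reach T (G.src e) r := reach_mono Set.diff_subset hrs
  have hstep : G.Reach T (G.src e) (G.tgt e) :=
    Relation.ReflTransGen.single ⟨e, he, Or.inl ⟨rfl, rfl⟩⟩
  have h2 : G.Reach T (G.src e) r' := hstep.trans (reach_mono Set.diff_subset hrt)
  have : r = r' := hu _ _ _ hr hr' h1 h2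
  subst this
  exact hforest e he (hrs.trans (reach_symm hrt))

/-- At least one endpoint of any edge reaches a root after deleting it. -/
lemma at_least_one (hex : ∀ x, ∃ r ∈ R, G.Reach T x r) (e : G.E) :
    (∃ r ∈ R, G.Reach (T \ {e}) (G.src e) r) ∨
    (∃ r ∈ R, G.Reach (T \ {e}) (G.tgt e) r) := by
  obtain ⟨r, hr, hreach⟩ := hex (G.src e)
  rcases reach_del hreach e with h1 | ⟨h2a, h2b⟩ | ⟨h3a, h3b⟩
  · exact Or.inl ⟨r, hr, h1⟩
  · exact Or.inr ⟨r, hr, h2b⟩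
  · exact Or.inl ⟨r, hr, h3b⟩

/-- Every non-root vertex reaching a root has a "parent edge": an incident
edge whose deletion cuts it off from all roots. -/
lemma exists_parent [Finite G.E] :
    ∀ (n : ℕ) (T : Set G.E), T.ncard = n → G.IsForestSub T →
      (∀ x r r', r ∈ R → r' ∈ R → G.Reach T x r → G.Reach T x r' → r = r') →
      ∀ x, x ∉ R → (∃ r ∈ R, G.Reach T x r) →
      ∃ e ∈ T, (G.src e = x ∨ G.tgt e = x) ∧ ∀ r ∈ R, ¬ G.Reach (T \ {e}) x r := by
  intro n
  induction n using Nat.strong_induction_on with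
  | _ n ih =>
    rintro T hn hforest hu x hxR ⟨r, hrR, hreach⟩
    rcases hreach.cases_head with heq | ⟨w, hadj, hwr⟩
    · exact absurd (heq ▸ hrR) hxR
    obtain ⟨e, he, hor⟩ := hadj
    have hend : G.src e = x ∨ G.tgt e = x := by
      rcases hor with ⟨h1, _⟩ | ⟨_, h2⟩
      · exact Or.inl h1
      · exact Or.inr h2
    by_cases hb : ∀ r' ∈ R, ¬ G.Reach (T \ {e}) x r'
    · exact ⟨e, he, hend, hb⟩
    push_neg at hb
    obtain ⟨r₀, hr₀, hx₀⟩ := hb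
    -- the other endpoint w reaches no root in T \ {e}
    have hw : ∀ r' ∈ R, ¬ G.Reach (T \ {e}) w r' := by
      intro r' hr' habs
      have hxw : G.Reach T x w := Relation.ReflTransGen.single ⟨e, he, hor⟩
      have hxr' : G.Reach T x r' := hxw.trans (reach_mono Set.diff_subset habs)
      have hxr₀ : G.Reach T x r₀ := reach_mono Set.diff_subset hx₀
      have : r₀ = r' := hu _ _ _ hr₀ hr' hxr₀ hxr'
      subst this
      have hxw' : G.Reach (T \ {e}) x w := hx₀.trans (reach_symm habs)
      rcases hor with ⟨h1, h2⟩ | ⟨h1, h2⟩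
      · exact hforest e he (h1 ▸ h2 ▸ hxw')
      · exact hforest e he (h1 ▸ h2 ▸ reach_symm hxw')
    -- apply the induction hypothesis to T \ {e}
    have hTfin : T.Finite := Set.toFinite T
    have hlt : (T \ {e}).ncard < n := hn ▸ Set.ncard_diff_singleton_lt_of_mem he hTfin
    obtain ⟨e₂, he₂, hend₂, hfail₂⟩ :=
      ih _ hlt (T \ {e}) rfl (forest_mono Set.diff_subset hforest)
        (fun x r r' hr hr' h1 h2 =>
          hu x r r' hr hr' (reach_mono Set.diff_subset h1) (reach_mono Set.diff_subset h2))
        x hxR ⟨r₀, hr₀, hx₀⟩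
    refine ⟨e₂, he₂.1, hend₂, ?_⟩
    intro r' hr' habs
    have hsub1 : (T \ {e₂}) \ {e} ⊆ T \ {e} := diff2_left
    have hss : (T \ {e₂}) \ {e} ⊆ (T \ {e}) \ {e₂} :=
      fun z hz => ⟨⟨hz.1.1, hz.2⟩, hz.1.2⟩
    have hsub2 : ∀ {x y}, G.Reach ((T \ {e₂}) \ {e}) x y → G.Reach ((T \ {e}) \ {e₂}) x y :=
      fun h => reach_mono hss h
    rcases reach_del habs e with h1 | ⟨h2a, h2b⟩ | ⟨h3a, h3b⟩
    · exact hfail₂ r' hr' (hsub2 h1)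
    · rcases hor with ⟨h1, h2⟩ | ⟨h1, h2⟩
      · -- src e = x, tgt e = w : tgt e → r' gives w reaches a root in T\{e}
        exact hw r' hr' (reach_mono hsub1 (h2 ▸ h2b))
      · -- src e = w, tgt e = x
        exact hfail₂ r' hr' (hsub2 (h2 ▸ h2b))
    · rcases hor with ⟨h1, h2⟩ | ⟨h1, h2⟩
      · exact hfail₂ r' hr' (hsub2 (h1 ▸ h3b))
      · exact hw r' hr' (reach_mono hsub1 (h1 ▸ h3b))

/-- The parent edge of a non-root vertex is unique. -/
lemma parent_unique (hforest : G.IsForestSub T)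
    (hu : ∀ x r r', r ∈ R → r' ∈ R → G.Reach T x r → G.Reach T x r' → r = r')
    (hex : ∀ x, ∃ r ∈ R, G.Reach T x r)
    {e e' : G.E} (he : e ∈ T) (he' : e' ∈ T) (hne : e ≠ e') {x : G.V ⊕ S}
    (hxe : G.src e = x ∨ G.tgt e = x) (hxe' : G.src e' = x ∨ G.tgt e' = x)
    (hf : ∀ r ∈ R, ¬ G.Reach (T \ {e}) x r)
    (hf' : ∀ r ∈ R, ¬ G.Reach (T \ {e'}) x r) : False := by
  -- p' : the other endpoint of e'; it reaches a root in T \ {e'}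
  obtain ⟨p', hp'end, hp'r⟩ :
      ∃ p', ((G.src e' = x ∧ G.tgt e' = p') ∨ (G.src e' = p' ∧ G.tgt e' = x)) ∧
        ∃ r' ∈ R, G.Reach (T \ {e'}) p' r' := by
    rcases at_least_one hex e' with ⟨r', hr', h⟩ | ⟨r', hr', h⟩
    · rcases hxe' with h1 | h1
      · exact absurd h (h1 ▸ hf' r' hr')
      · exact ⟨G.src e', Or.inr ⟨rfl, h1⟩, r', hr', h⟩
    · rcases hxe' with h1 | h1
      · exact ⟨G.tgt e', Or.inl ⟨h1, rfl⟩, r', hr', h⟩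
      · exact absurd h (h1 ▸ hf' r' hr')
  obtain ⟨r', hr', hp'⟩ := hp'r
  have he'mem : e' ∈ T \ {e} := ⟨he', fun h => hne h.symm⟩
  have hadj : G.Adj (T \ {e}) x p' := by
    rcases hp'end with ⟨h1, h2⟩ | ⟨h1, h2⟩
    · exact ⟨e', he'mem, Or.inl ⟨h1, h2⟩⟩
    · exact ⟨e', he'mem, Or.inr ⟨h1, h2⟩⟩
  rcases reach_del hp' e with h1 | ⟨h2a, h2b⟩ | ⟨h3a, h3b⟩
  · exact hf r' hr'
      ((Relation.ReflTransGen.single hadj).trans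
        (reach_mono diff2_left h1))
  · rcases hxe with hx1 | hx1
    ·
      have hpx : G.Reach (T \ {e'}) p' x := reach_mono Set.diff_subset (hx1 ▸ h2a)
      exact hf' r' hr' ((reach_symm hpx).trans hp')
    · -- tgt e = x : tgt e → r' is x → r'
      exact hf r' hr' (reach_mono diff2_left (hx1 ▸ h2b))
  · rcases hxe with hx1 | hx1
    · exact hf r' hr' (reach_mono diff2_left (hx1 ▸ h3b))
    · have hpx : G.Reach (T \ {e'}) p' x := reach_mono Set.diff_subset (hx1 ▸ h3a)
      exact hf' r' hr' ((reach_symm hpx).trans hp')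

open Classical in
/-- the endpoint of a forest edge on the far side from the roots -/
noncomputable def childVx (G : HGraph S) (T : Set G.E) (R : Set (G.V ⊕ S))
    (e : G.E) : G.V ⊕ S :=
  if ∃ r ∈ R, G.Reach (T \ {e}) (G.src e) r then G.tgt e else G.src e

lemma childVx_spec (hforest : G.IsForestSub T)
    (hu : ∀ x r r', r ∈ R → r' ∈ R → G.Reach T x r → G.Reach T x r' → r = r')
    {e : G.E} (he : e ∈ T) :
    (G.src e = childVx G T R e ∨ G.tgt e = childVx G T R e) ∧
      ∀ r ∈ R, ¬ G.Reach (T \ {e}) (childVx G T R e) r := by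
  unfold childVx
  split_ifs with h
  · refine ⟨Or.inr rfl, fun r hr habs => ?_⟩
    exact not_both hforest hu he ⟨h, r, hr, habs⟩
  · push_neg at h
    exact ⟨Or.inl rfl, h⟩

lemma childVx_not_root (hforest : G.IsForestSub T)
    (hu : ∀ x r r', r ∈ R → r' ∈ R → G.Reach T x r → G.Reach T x r' → r = r')
    {e : G.E} (he : e ∈ T) : childVx G T R e ∉ R := fun hmem =>
  (childVx_spec hforest hu he).2 _ hmem Relation.ReflTransGen.refl

/-- The child map is a bijection from the edges of a rooted forest to the
non-root vertices. -/
lemma card_forest [Finite G.E] (hforest : G.IsForestSub T)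
    (hex : ∀ x, ∃ r ∈ R, G.Reach T x r)
    (hu : ∀ x r r', r ∈ R → r' ∈ R → G.Reach T x r → G.Reach T x r' → r = r') :
    Nat.card ↥T = Nat.card {x : G.V ⊕ S // x ∉ R} := by
  have hbij : Function.Bijective
      (fun e : ↥T => (⟨childVx G T R e.1, childVx_not_root hforest hu e.2⟩ :
        {x : G.V ⊕ S // x ∉ R})) := by
    constructor
    · rintro ⟨e, hem⟩ ⟨e', he'm⟩ heq
      simp only [Subtype.mk.injEq] at heq ⊢
      by_contra hne
      obtain ⟨hend, hfail⟩ := childVx_spec hforest hu hem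
      obtain ⟨hend', hfail'⟩ := childVx_spec (R := R) hforest hu he'm
      exact parent_unique hforest hu hex hem he'm hne hend (heq ▸ hend')
        hfail (heq ▸ hfail')
    · rintro ⟨x, hxR⟩
      obtain ⟨e, he, hend, hfail⟩ :=
        exists_parent T.ncard T rfl hforest hu x hxR (hex x)
      refine ⟨⟨e, he⟩, ?_⟩
      simp only [Subtype.mk.injEq]
      obtain ⟨hend₂, hfail₂⟩ := childVx_spec (R := R) hforest hu he
      by_contra hne
      -- then both endpoints of e fail to reach roots, contradicting at_least_one
      rcases at_least_one hex e with ⟨r, hr, h⟩ | ⟨r, hr, h⟩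
      · rcases hend with h1 | h1
        · exact hfail r hr (h1 ▸ h)
        · rcases hend₂ with h2 | h2
          · exact hfail₂ r hr (h2 ▸ h)
          · exact hne ((h1 ▸ h2 : x = _).symm ▸ rfl)
      · rcases hend with h1 | h1
        · rcases hend₂ with h2 | h2
          · exact hne ((h1 ▸ h2 : x = _).symm ▸ rfl)
          · exact hfail₂ r hr (h2 ▸ h)
        · exact hfail r hr (h1 ▸ h)
  exact Nat.card_congr (Equiv.ofBijective _ hbij)

/-- non-root vertices for the set of external roots -/
lemma card_compl_ext (G : HGraph S) :
    Nat.card {x : G.V ⊕ S // x ∉ Set.range (Sum.inr : S → G.V ⊕ S)} =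
      Nat.card G.V := by
  refine (Nat.card_congr (Equiv.ofBijective
    (fun v : G.V => (⟨Sum.inl v, by simp⟩ :
      {x : G.V ⊕ S // x ∉ Set.range (Sum.inr : S → G.V ⊕ S)})) ⟨?_, ?_⟩)).symm
  · intro v v' h
    simpa using h
  · rintro ⟨(v | s), h⟩
    · exact ⟨v, rfl⟩
    · exact absurd ⟨s, rfl⟩ h

lemma card_compl_ext' (G : HGraph S) (y₀ : G.V) :
    Nat.card {x : G.V ⊕ S //
        x ∉ insert (Sum.inl y₀) (Set.range (Sum.inr : S → G.V ⊕ S))} =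
      Nat.card {v : G.V // v ≠ y₀} := by
  refine (Nat.card_congr (Equiv.ofBijective
    (fun v : {v : G.V // v ≠ y₀} => (⟨Sum.inl v.1, by
      simp [v.2]⟩ :
      {x : G.V ⊕ S //
        x ∉ insert (Sum.inl y₀) (Set.range (Sum.inr : S → G.V ⊕ S))})) ⟨?_, ?_⟩)).symm
  · rintro ⟨v, hv⟩ ⟨v', hv'⟩ h
    simpa using h
  · rintro ⟨(v | s), h⟩
    · simp only [Set.mem_insert_iff, not_or] at h
      exact ⟨⟨v, by simpa using h.1⟩, rfl⟩
    · exact absurd (Set.mem_insert_of_mem _ (Set.mem_range_self s)) h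

lemma card_ne_add_one {V : Type} [Finite V] (y₀ : V) :
    Nat.card {v : V // v ≠ y₀} + 1 = Nat.card V := by
  classical
  cases nonempty_fintype V
  simp only [Nat.card_eq_fintype_card]
  have h1 : Fintype.card {v : V // ¬ v = y₀} = Fintype.card V - 1 := by
    rw [Fintype.card_subtype_compl, Fintype.card_subtype_eq]
  have h2 : 1 ≤ Fintype.card V := Fintype.card_pos_iff.mpr ⟨y₀⟩
  have : Fintype.card {v : V // v ≠ y₀} = Fintype.card {v : V // ¬ v = y₀} :=
    Fintype.card_congr (Equiv.refl _)
  omega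

/-- uniqueness of reachable externals, extracted from a spanning/cycled forest -/
lemma ext_unique {T : Set G.E} (h : ∀ x : G.V ⊕ S, ∃! s : S, G.Reach T x (Sum.inr s)) :
    ∀ (x : G.V ⊕ S) (r r' : G.V ⊕ S),
      r ∈ Set.range (Sum.inr : S → G.V ⊕ S) →
      r' ∈ Set.range (Sum.inr : S → G.V ⊕ S) →
      G.Reach T x r → G.Reach T x r' → r = r' := by
  rintro x r r' ⟨s, rfl⟩ ⟨s', rfl⟩ h1 h2
  obtain ⟨s₀, _, huniq⟩ := h x
  rw [huniq s h1, huniq s' h2]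

/-- a spanning forest has exactly as many edges as there are internal vertices -/
lemma spanning_card [Finite G.E] {T : Set G.E} (h : G.IsSpanningForest T) :
    T.ncard = Nat.card G.V := by
  have hex : ∀ x, ∃ r ∈ Set.range (Sum.inr : S → G.V ⊕ S), G.Reach T x r := by
    intro x
    obtain ⟨s, hs, _⟩ := h.2 x
    exact ⟨Sum.inr s, ⟨s, rfl⟩, hs⟩
  have := card_forest h.1 hex (ext_unique h.2)
  rw [Nat.card_coe_set_eq, card_compl_ext] at this
  exact this

/-- removing an edge of the cycle from a cycled forest yields a spanning forest
with the endpoints of the removed edge still connected -/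
lemma forward_spanning [Finite G.V] [Finite G.E] {ρ : Set G.E} {a : G.E}
    (hρ : G.IsCycledForest ρ) (ha : a ∈ ρ) (hfor : G.IsForestSub (ρ \ {a})) :
    G.IsSpanningForest (ρ \ {a}) ∧ G.Reach (ρ \ {a}) (G.src a) (G.tgt a) := by
  have hexT : ∀ x, ∃ s : S, G.Reach (ρ \ {a}) x (Sum.inr s) := by
    by_contra hcon
    push_neg at hcon
    obtain ⟨x₀, hx₀⟩ := hcon
    -- a failing endpoint of `a`
    obtain ⟨y, hyend, hyfail⟩ :
        ∃ y, (y = G.src a ∨ y = G.tgt a) ∧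
          ∀ s : S, ¬ G.Reach (ρ \ {a}) y (Sum.inr s) := by
      obtain ⟨s₀, hs₀, _⟩ := hρ.2 x₀
      rcases reach_del hs₀ a with h1 | ⟨h2a, h2b⟩ | ⟨h3a, h3b⟩
      · exact absurd h1 (hx₀ s₀)
      · exact ⟨G.src a, Or.inl rfl, fun s hs => hx₀ s (h2a.trans hs)⟩
      · exact ⟨G.tgt a, Or.inr rfl, fun s hs => hx₀ s (h3a.trans hs)⟩
    obtain ⟨y₀, rfl⟩ : ∃ y₀ : G.V, y = Sum.inl y₀ := by
      cases y with
      | inl v => exact ⟨v, rfl⟩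
      | inr s => exact absurd Relation.ReflTransGen.refl (hyfail s)
    set R' : Set (G.V ⊕ S) :=
      insert (Sum.inl y₀) (Set.range (Sum.inr : S → G.V ⊕ S)) with hR'
    have hdisj : ∀ x, (∃ s : S, G.Reach (ρ \ {a}) x (Sum.inr s)) ∨
        G.Reach (ρ \ {a}) x (Sum.inl y₀) := by
      intro x
      obtain ⟨s, hs, _⟩ := hρ.2 x
      rcases reach_del hs a with h1 | ⟨h2a, h2b⟩ | ⟨h3a, h3b⟩
      · exact Or.inl ⟨s, h1⟩
      · rcases hyend with hy | hy
        · exact Or.inr (hy ▸ h2a)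
        · exact absurd (hy ▸ h2b) (hyfail s)
      · rcases hyend with hy | hy
        · exact absurd (hy ▸ h3b) (hyfail s)
        · exact Or.inr (hy ▸ h3a)
    have hex' : ∀ x, ∃ r ∈ R', G.Reach (ρ \ {a}) x r := by
      intro x
      rcases hdisj x with ⟨s, hs⟩ | hy
      · exact ⟨Sum.inr s, Set.mem_insert_of_mem _ ⟨s, rfl⟩, hs⟩
      · exact ⟨Sum.inl y₀, Set.mem_insert _ _, hy⟩
    have hu' : ∀ (x r r' : G.V ⊕ S), r ∈ R' → r' ∈ R' →
        G.Reach (ρ \ {a}) x r → G.Reach (ρ \ {a}) x r' → r = r' := by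
      intro x r r' hr hr' h1 h2
      rcases hr with rfl | ⟨s, rfl⟩ <;> rcases hr' with h' | ⟨s', rfl⟩
      · rw [h']
      · exact absurd ((reach_symm h1).trans h2) (hyfail s')
      · rw [h'] at h2
        exact absurd ((reach_symm h2).trans h1) (hyfail s)
      · exact ext_unique hρ.2 x _ _ ⟨s, rfl⟩ ⟨s', rfl⟩
          (reach_mono Set.diff_subset h1) (reach_mono Set.diff_subset h2)
    have hcard := card_forest hfor hex' hu'
    rw [Nat.card_coe_set_eq, hR', card_compl_ext'] at hcard
    have hρcard : (ρ \ {a}).ncard = Nat.card G.V := by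
      rw [Set.ncard_diff_singleton_of_mem ha, hρ.1]
      omega
    have hone := card_ne_add_one y₀
    omega
  have hspan : G.IsSpanningForest (ρ \ {a}) := by
    refine ⟨hfor, fun x => ?_⟩
    obtain ⟨s, hs⟩ := hexT x
    refine ⟨s, hs, fun s' hs' => ?_⟩
    obtain ⟨s₀, _, huniq⟩ := hρ.2 x
    rw [huniq s' (reach_mono Set.diff_subset hs'),
        huniq s (reach_mono Set.diff_subset hs)]
  refine ⟨hspan, ?_⟩
  obtain ⟨s₁, hs₁⟩ := hexT (G.src a)
  obtain ⟨s₂, hs₂⟩ := hexT (G.tgt a)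
  have hstep : G.Reach ρ (G.src a) (G.tgt a) :=
    Relation.ReflTransGen.single ⟨a, ha, Or.inl ⟨rfl, rfl⟩⟩
  obtain ⟨s₀, _, huniq⟩ := hρ.2 (G.src a)
  have h12 : s₁ = s₂ := by
    rw [huniq s₁ (reach_mono Set.diff_subset hs₁),
        huniq s₂ (hstep.trans (reach_mono Set.diff_subset hs₂))]
  exact hs₁.trans (reach_symm (h12 ▸ hs₂))

/-- adding an edge with connected endpoints to a spanning forest yields a
cycled forest -/
lemma backward_cycled [Finite G.E] {τ : Set G.E} {a : G.E}
    (hτ : G.IsSpanningForest τ) (ha : a ∉ τ)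
    (hc : G.Reach τ (G.src a) (G.tgt a)) :
    G.IsCycledForest (insert a τ) := by
  constructor
  · rw [Set.ncard_insert_of_notMem ha, spanning_card hτ]
  · intro x
    obtain ⟨s, hs, huniq⟩ := hτ.2 x
    exact ⟨s, reach_mono (Set.subset_insert a τ) hs,
      fun s' hs' => huniq s' (reach_insert_elim hc hs')⟩

end Roots

end Statement9

theorem statement_9 (S : Type) [Finite S] (G : HGraph S)
    (hfin : G.IsFinite) (hconn : G.Connected) (hhairy : G.IsHairy) :
    ∃ f : {p : Set G.E × G.E //
          G.IsCycledForest p.1 ∧ p.2 ∈ p.1 ∧ G.IsForestSub (p.1 \ {p.2})} ≃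
        {p : Set G.E × G.E //
          G.IsSpanningForest p.1 ∧ p.2 ∉ p.1 ∧
            G.Reach p.1 (G.src p.2) (G.tgt p.2)},
      ∀ p, ((f p : {p : Set G.E × G.E //
            G.IsSpanningForest p.1 ∧ p.2 ∉ p.1 ∧
              G.Reach p.1 (G.src p.2) (G.tgt p.2)}) : Set G.E × G.E)
          = ((p : Set G.E × G.E).1 \ {(p : Set G.E × G.E).2},
             (p : Set G.E × G.E).2) := by
  classical
  obtain ⟨hfinV, hfinE⟩ := hfin
  haveI := hfinV
  haveI := hfinE
  refine ⟨⟨fun p => ⟨((p : Set G.E × G.E).1 \ {(p : Set G.E × G.E).2},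
            (p : Set G.E × G.E).2), ?_⟩,
          fun q => ⟨(insert (q : Set G.E × G.E).2 (q : Set G.E × G.E).1,
            (q : Set G.E × G.E).2), ?_⟩,
          ?_, ?_⟩, fun p => rfl⟩
  · obtain ⟨⟨ρ, a⟩, h1, h2, h3⟩ := p
    obtain ⟨hspan, hreach⟩ := Statement9.forward_spanning h1 h2 h3
    exact ⟨hspan, fun h => h.2 rfl, hreach⟩
  · obtain ⟨⟨τ, a⟩, h1, h2, h3⟩ := q
    refine ⟨Statement9.backward_cycled h1 h2 h3, Set.mem_insert _ _, ?_⟩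
    rw [Set.insert_diff_self_of_notMem h2]
    exact h1.1
  · rintro ⟨⟨ρ, a⟩, h1, h2, h3⟩
    exact Subtype.ext (by
      simp only [Set.insert_diff_singleton, Set.insert_eq_self.2 h2])
  · rintro ⟨⟨τ, a⟩, h1, h2, h3⟩
    exact Subtype.ext (by
      simp only [Set.insert_diff_self_of_notMem h2])

end
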